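/- Let R be a commutative ring, I an ideal of R, N ≥ 0, and let A, B be n×n matrices over R with A ≡ I_n and B ≡ I_n modulo I^{N+1} (entrywise). Then the commutator ABA⁻¹B⁻¹ is congruent to the identity modulo I^{2N+2}, assuming A and B are invertible. -/
import Mathlib


open Matrix

/-- If `A, B ∈ GLₙ(R)` are congruent to the identity modulo `I^(N+1)` (entrywise),
then the commutator `A * B * A⁻¹ * B⁻¹` is congruent to the identity modulo `I^(2N+2)`. -/
theorem commutator_congr_one_mod_sq {R : Type*} [CommRing R] (I : Ideal R) (N : ℕ)
    {n : ℕ} (A B : (Matrix (Fin n) (Fin n) R)ˣ)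
    (hA : ∀ i j, ((A : Matrix (Fin n) (Fin n) R) - 1) i j ∈ I ^ (N + 1))
    (hB : ∀ i j, ((B : Matrix (Fin n) (Fin n) R) - 1) i j ∈ I ^ (N + 1)) :
    ∀ i j, (((A * B * A⁻¹ * B⁻¹ : (Matrix (Fin n) (Fin n) R)ˣ) : Matrix (Fin n) (Fin n) R) - 1) i j
      ∈ I ^ (2 * N + 2) := by
  set M := Matrix (Fin n) (Fin n) R
  have hcomm : ∀ i j, ((A : M) * B - (B : M) * A) i j ∈ I ^ (2 * N + 2) := by
    intro i j
    have h : (A : M) * B - (B : M) * A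
        = ((A : M) - 1) * ((B : M) - 1) - ((B : M) - 1) * ((A : M) - 1) := by
      noncomm_ring
    have h2 : 2 * N + 2 = (N + 1) + (N + 1) := by ring
    rw [h, h2, pow_add, Matrix.sub_apply]
    refine Ideal.sub_mem _ ?_ ?_ <;> rw [Matrix.mul_apply] <;>
      exact Ideal.sum_mem _ fun k _ => Ideal.mul_mem_mul (by apply_rules) (by apply_rules)
  have e : ((A * B * A⁻¹ * B⁻¹ : Mˣ) : M) - 1
      = ((A : M) * B - (B : M) * A) * (((A⁻¹ : Mˣ) : M) * ((B⁻¹ : Mˣ) : M)) := by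
    have h1 : ((B : M) * A) * (((A⁻¹ : Mˣ) : M) * ((B⁻¹ : Mˣ) : M)) = 1 := by
      rw [mul_assoc, ← mul_assoc (A : M), Units.mul_inv, one_mul, Units.mul_inv]
    rw [sub_mul, h1]
    simp [Units.val_mul, mul_assoc, ← Matrix.coe_units_inv]
  intro i j
  rw [e, Matrix.mul_apply]
  exact Ideal.sum_mem _ fun k _ => Ideal.mul_mem_right _ _ (hcomm i k)
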